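/- Let P be an r-differential poset and let t_0 ∈ P be a thread element. Then there exists an infinite sequence t_0 ⋖ t_1 ⋖ t_2 ⋖ ⋯ in P in which every t_i is a thread element and t_{i+1} covers t_i for each i ≥ 0. -/

import Mathlib

open Classical in
/-- The up operator `U_n : ℚP_n → ℚP_{n+1}` of a graded poset with rank function `rank`,
sending each basis element `x ∈ P_n` to the sum of the elements covering it. -/
noncomputable def upMap {P : Type*} [PartialOrder P] (rank : P → ℕ)
    [∀ m : ℕ, Fintype {x : P // rank x = m}] (n : ℕ) :
    ({x : P // rank x = n} → ℚ) →ₗ[ℚ] ({x : P // rank x = n + 1} → ℚ) :=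
  Matrix.mulVecLin (fun (y : {x : P // rank x = n + 1}) (x : {x : P // rank x = n}) =>
    if (x : P) ⋖ (y : P) then 1 else 0)

open Classical in
/-- The down operator `D_n : ℚP_n → ℚP_{n-1}` of a graded poset with rank function `rank`,
sending each basis element `x ∈ P_n` to the sum of the elements it covers.
(For `n = 0` this is the zero map on `ℚP_0` in a graded poset, matching `D_0 = 0`.) -/
noncomputable def downMap {P : Type*} [PartialOrder P] (rank : P → ℕ)
    [∀ m : ℕ, Fintype {x : P // rank x = m}] (n : ℕ) :
    ({x : P // rank x = n} → ℚ) →ₗ[ℚ] ({x : P // rank x = n - 1} → ℚ) :=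
  Matrix.mulVecLin (fun (z : {x : P // rank x = n - 1}) (x : {x : P // rank x = n}) =>
    if (z : P) ⋖ (x : P) then 1 else 0)

/-- `P` (a partial order with rank function `rank`, all rank sets finite) is an
`r`-differential poset: `r > 0`, there is a least element `0̂` of rank `0`, the poset is
graded (covers raise rank by exactly one, the rank function is strictly monotone, and every
element of nonzero rank covers something), and `D_{n+1} U_n - U_{n-1} D_n = r·I` on `ℚP_n`
for all `n ≥ 0` (for `n = 0` the relation reads `D_1 U_0 = r·I`, since `D_0 = 0`). -/
structure IsDifferentialPoset {P : Type*} [PartialOrder P] (rank : P → ℕ)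
    [∀ m : ℕ, Fintype {x : P // rank x = m}] (r : ℕ) : Prop where
  r_pos : 0 < r
  exists_bot : ∃ b : P, rank b = 0 ∧ ∀ x : P, b ≤ x
  rank_covBy : ∀ x y : P, x ⋖ y → rank y = rank x + 1
  rank_strictMono : ∀ x y : P, x < y → rank x < rank y
  exists_covBy_of_rank_ne_zero : ∀ x : P, rank x ≠ 0 → ∃ y : P, y ⋖ x
  diff_zero : downMap rank 1 ∘ₗ upMap rank 0 = (r : ℚ) • LinearMap.id
  diff : ∀ n : ℕ,
    LinearMap.comp (M₃ := {x : P // rank x = n + 1} → ℚ)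
        (downMap rank (n + 2)) (upMap rank (n + 1))
      - upMap rank n ∘ₗ downMap rank (n + 1) = (r : ℚ) • LinearMap.id

/-- An element of a graded poset is a *singleton* if it has rank `0` (i.e. it is `0̂`)
or it covers exactly one element. -/
def IsSingletonElem {P : Type*} [PartialOrder P] (rank : P → ℕ) (x : P) : Prop :=
  rank x = 0 ∨ ∃! z : P, z ⋖ x

/-- A *thread element* is a singleton which covers another singleton. -/
def IsThreadElem {P : Type*} [PartialOrder P] (rank : P → ℕ) (x : P) : Prop :=
  IsSingletonElem rank x ∧ ∃ z : P, z ⋖ x ∧ IsSingletonElem rank z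

section Aux
open Classical
variable {P : Type*} [PartialOrder P] (rank : P → ℕ) [∀ m : ℕ, Fintype {x : P // rank x = m}]

/-- number of common covers of `x, x'` at level `n` -/
noncomputable def ccUp (n : ℕ) (x x' : P) : ℕ :=
  (Finset.univ.filter fun y : {p : P // rank p = n} => x ⋖ y.1 ∧ x' ⋖ y.1).card

/-- number of common elements covered by `x, x'` at level `n` -/
noncomputable def ccDown (n : ℕ) (x x' : P) : ℕ :=
  (Finset.univ.filter fun z : {p : P // rank p = n} => z.1 ⋖ x ∧ z.1 ⋖ x').card

lemma DU_entry (n : ℕ) (x x' : {p : P // rank p = n}) :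
    (downMap rank (n + 1) ∘ₗ upMap rank n) (Pi.single x' 1) x
      = (ccUp rank (n + 1) x.1 x'.1 : ℚ) := by
  simp only [LinearMap.comp_apply, upMap, downMap, Matrix.mulVecLin_apply, Matrix.mulVec,
    dotProduct, Pi.single_apply, mul_ite, ite_mul, mul_one, mul_zero, zero_mul, one_mul,
    Finset.sum_ite_eq', Finset.mem_univ, if_true]
  rw [ccUp, ← Finset.sum_boole]
  apply Finset.sum_congr rfl
  intro y _
  by_cases h1 : (x.1 : P) ⋖ y.1 <;> by_cases h2 : (x'.1 : P) ⋖ y.1 <;> erw [Matrix.mulVecLin_apply] <;> simp [h1, h2, Matrix.mulVec, dotProduct, Pi.single_apply]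

lemma UD_entry (n : ℕ) (x x' : {p : P // rank p = n + 1}) :
    (upMap rank n ∘ₗ downMap rank (n + 1)) (Pi.single x' 1) x
      = (ccDown rank n x.1 x'.1 : ℚ) := by
  simp only [LinearMap.comp_apply, upMap, downMap, Matrix.mulVecLin_apply, Matrix.mulVec,
    dotProduct, Pi.single_apply, mul_ite, ite_mul, mul_one, mul_zero, zero_mul, one_mul,
    Finset.sum_ite_eq', Finset.mem_univ, if_true]
  rw [ccDown, ← Finset.sum_boole]
  apply Finset.sum_congr rfl
  intro z _
  by_cases h1 : (z.1 : P) ⋖ x.1 <;> by_cases h2 : (z.1 : P) ⋖ x'.1 <;> erw [Matrix.mulVecLin_apply] <;> simp [h1, h2, Matrix.mulVec, dotProduct, Pi.single_apply]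

variable {r : ℕ}

lemma keyQ (hP : IsDifferentialPoset rank r) (n : ℕ) (x x' : P)
    (hx : rank x = n + 1) (hx' : rank x' = n + 1) :
    (ccUp rank (n + 2) x x' : ℚ)
      = ccDown rank n x x' + if x = x' then (r : ℚ) else 0 := by
  have h := LinearMap.congr_fun (hP.diff n) (Pi.single (⟨x', hx'⟩ : {p : P // rank p = n + 1}) 1)
  have h3 := congrFun h ⟨x, hx⟩
  rw [LinearMap.sub_apply, Pi.sub_apply] at h3
  have key : (ccUp rank (n + 2) x x' : ℚ) - (ccDown rank n x x' : ℚ)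
      = ((r : ℚ) • (LinearMap.id (R := ℚ) (M := {p : P // rank p = n + 1} → ℚ)))
          (Pi.single ⟨x', hx'⟩ 1) ⟨x, hx⟩ := by
    rw [← DU_entry rank (n + 1) ⟨x, hx⟩ ⟨x', hx'⟩, ← UD_entry rank n ⟨x, hx⟩ ⟨x', hx'⟩]
    exact h3
  simp only [LinearMap.smul_apply, LinearMap.id_apply, Pi.smul_apply, Pi.single_apply,
    smul_eq_mul, Subtype.mk.injEq] at key
  by_cases hxx : x = x'
  · simp only [if_pos hxx] at key ⊢; linarith
  · simp only [if_neg hxx] at key ⊢; linarith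

lemma key0 (hP : IsDifferentialPoset rank r) (z : P) (hz : rank z = 0) :
    ccUp rank 1 z z = r := by
  have h := LinearMap.congr_fun hP.diff_zero (Pi.single (⟨z, hz⟩ : {p : P // rank p = 0}) 1)
  have h3 := congrFun h ⟨z, hz⟩
  have key : (ccUp rank 1 z z : ℚ)
      = ((r : ℚ) • (LinearMap.id (R := ℚ) (M := {p : P // rank p = 0} → ℚ)))
          (Pi.single ⟨z, hz⟩ 1) ⟨z, hz⟩ := by
    rw [← DU_entry rank 0 ⟨z, hz⟩ ⟨z, hz⟩]
    exact h3
  simp only [LinearMap.smul_apply, LinearMap.id_apply, Pi.smul_apply, Pi.single_apply,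
    smul_eq_mul, if_pos rfl, if_true, mul_one] at key
  exact_mod_cast key

lemma ccDown_self (hP : IsDifferentialPoset rank r) (n : ℕ) (x z : P)
    (hx : rank x = n + 1) (hzx : z ⋖ x) (hu : ∀ w, w ⋖ x → w = z) :
    ccDown rank n x x = 1 := by
  have hzr : rank z = n := by have := hP.rank_covBy z x hzx; omega
  rw [ccDown, Finset.card_eq_one]
  refine ⟨⟨z, hzr⟩, ?_⟩
  ext w
  simp only [Finset.mem_filter, Finset.mem_univ, true_and, Finset.mem_singleton]
  constructor
  · rintro ⟨hw, -⟩; exact Subtype.ext (hu w.1 hw)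
  · rintro rfl; exact ⟨hzx, hzx⟩

lemma ccDown_le_one (hP : IsDifferentialPoset rank r) (n : ℕ) (x z x' : P)
    (hx : rank x = n + 1) (hzx : z ⋖ x) (hu : ∀ w, w ⋖ x → w = z) :
    ccDown rank n x x' ≤ 1 := by
  have h1 := ccDown_self rank hP n x z hx hzx hu
  calc ccDown rank n x x' ≤ ccDown rank n x x := by
        apply Finset.card_le_card
        intro w hw
        simp only [Finset.mem_filter, Finset.mem_univ, true_and] at hw ⊢
        exact ⟨hw.1, hw.1⟩
    _ = 1 := h1

lemma ccDown_pos_covby (n : ℕ) (x z x' : P) (hu : ∀ w, w ⋖ x → w = z)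
    (h : 0 < ccDown rank n x x') : z ⋖ x' := by
  rw [ccDown, Finset.card_pos] at h
  obtain ⟨w, hw⟩ := h
  simp only [Finset.mem_filter, Finset.mem_univ, true_and] at hw
  rw [← hu w.1 hw.1]
  exact hw.2

lemma ccUp_self_le (hP : IsDifferentialPoset rank r) (n : ℕ) (z : P)
    (hz : rank z = n) (hzs : IsSingletonElem rank z) :
    ccUp rank (n + 1) z z ≤ 1 + r := by
  rcases n with _ | m
  · rw [key0 rank hP z hz]; omega
  · rcases hzs with h0 | ⟨w, hw, hwu⟩
    · omega
    · have hu : ∀ w', w' ⋖ z → w' = w := fun w' h' => hwu w' h'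
      have h1 : ccDown rank m z z = 1 := ccDown_self rank hP m z w hz hw hu
      have h2 := keyQ rank hP m z z hz hz
      rw [h1, if_pos rfl] at h2
      have h3 : ccUp rank (m + 2) z z = 1 + r := by exact_mod_cast h2
      show ccUp rank (m + 2) z z ≤ 1 + r
      omega

lemma exists_singleton_cover (hP : IsDifferentialPoset rank r) (x : P)
    (hx : IsThreadElem rank x) : ∃ y, x ⋖ y ∧ ∀ w, w ⋖ y → w = x := by
  obtain ⟨hxs, z, hzx, hzs⟩ := hx
  have hxr : rank x = rank z + 1 := hP.rank_covBy z x hzx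
  set n := rank z with hn
  have huniq : ∀ w, w ⋖ x → w = z := by
    rcases hxs with h0 | ⟨w, hw, hwu⟩
    · exact absurd h0 (by omega)
    · exact fun w' hw' => (hwu w' hw').trans (hwu z hzx).symm
  have hDxx : ccDown rank n x x = 1 := ccDown_self rank hP n x z hxr hzx huniq
  have hUxx : ccUp rank (n + 2) x x = 1 + r := by
    have h := keyQ rank hP n x x hxr hxr
    rw [hDxx, if_pos rfl] at h
    exact_mod_cast h
  have hUz : ccUp rank (n + 1) z z ≤ 1 + r := ccUp_self_le rank hP n z rfl hzs
  have hcommon : ∀ x', rank x' = n + 1 → x' ≠ x →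
      ccUp rank (n + 2) x x' = ccDown rank n x x' := by
    intro x' hx' hne
    have h := keyQ rank hP n x x' hxr hx'
    rw [if_neg (fun h' => hne h'.symm), add_zero] at h
    exact_mod_cast h
  by_contra hcon
  push_neg at hcon
  -- hcon : ∀ y, x ⋖ y → ∃ w, w ⋖ y ∧ w ≠ x
  have hrank_w : ∀ (y : {p : P // rank p = n + 2}) (w : P), w ⋖ y.1 → rank w = n + 1 := by
    intro y w hw
    have := hP.rank_covBy w y.1 hw
    have := y.2
    omega
  have hzw : ∀ (w : P), rank w = n + 1 → w ≠ x →
      (∃ y : {p : P // rank p = n + 2}, x ⋖ y.1 ∧ w ⋖ y.1) → z ⋖ w := by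
    intro w hwr hwne hy
    apply ccDown_pos_covby rank n x z w huniq
    have hpos : 0 < ccUp rank (n + 2) x w := by
      rw [ccUp, Finset.card_pos]
      obtain ⟨y, hy1, hy2⟩ := hy
      exact ⟨y, by simp [hy1, hy2]⟩
    rwa [hcommon w hwr hwne] at hpos
  let f : {p : P // rank p = n + 2} → {p : P // rank p = n + 1} := fun y =>
    if h : x ⋖ y.1 then ⟨(hcon y.1 h).choose, hrank_w y _ (hcon y.1 h).choose_spec.1⟩
    else ⟨x, hxr⟩
  let Sx : Finset {p : P // rank p = n + 2} :=
    Finset.univ.filter fun y => x ⋖ y.1 ∧ x ⋖ y.1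
  let T : Finset {p : P // rank p = n + 1} :=
    Finset.univ.filter fun w => z ⋖ w.1 ∧ z ⋖ w.1
  have hSx : Sx.card = 1 + r := hUxx
  have hT : T.card ≤ 1 + r := hUz
  have hxT : (⟨x, hxr⟩ : {p : P // rank p = n + 1}) ∈ T := by
    simp only [T, Finset.mem_filter, Finset.mem_univ, true_and]
    exact ⟨hzx, hzx⟩
  have hTpos : 0 < T.card := Finset.card_pos.2 ⟨_, hxT⟩
  have hSz : (T.erase ⟨x, hxr⟩).card ≤ r := by
    rw [Finset.card_erase_of_mem hxT]; omega
  have hmaps : ∀ y ∈ Sx, f y ∈ T.erase ⟨x, hxr⟩ := by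
    intro y hy
    have hxy : x ⋖ y.1 := by
      simp only [Sx, Finset.mem_filter, Finset.mem_univ, true_and] at hy
      exact hy.1
    obtain ⟨hwcov, hwne⟩ := (hcon y.1 hxy).choose_spec
    have hfy : f y = ⟨(hcon y.1 hxy).choose, hrank_w y _ hwcov⟩ := dif_pos hxy
    rw [hfy]
    rw [Finset.mem_erase]
    constructor
    · exact fun h => hwne (congrArg Subtype.val h)
    · have hz' : z ⋖ (hcon y.1 hxy).choose :=
        hzw _ (hrank_w y _ hwcov) hwne ⟨y, hxy, hwcov⟩
      simp only [T, Finset.mem_filter, Finset.mem_univ, true_and]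
      exact ⟨hz', hz'⟩
  have hinj : Set.InjOn f Sx := by
    intro y1 h1 y2 h2 heq
    by_contra hne
    simp only [Finset.coe_filter, Set.mem_setOf_eq, Finset.mem_univ, true_and, Sx] at h1 h2
    have hxy1 : x ⋖ y1.1 := h1.1
    have hxy2 : x ⋖ y2.1 := h2.1
    have hf1 : f y1 = ⟨(hcon y1.1 hxy1).choose, hrank_w y1 _ (hcon y1.1 hxy1).choose_spec.1⟩ :=
      dif_pos hxy1
    have hf2 : f y2 = ⟨(hcon y2.1 hxy2).choose, hrank_w y2 _ (hcon y2.1 hxy2).choose_spec.1⟩ :=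
      dif_pos hxy2
    set w1 := (hcon y1.1 hxy1).choose with hw1def
    set w2 := (hcon y2.1 hxy2).choose with hw2def
    have hww : w1 = w2 := by
      have := hf1.symm.trans (heq.trans hf2)
      exact congrArg Subtype.val this
    have hw1cov : w1 ⋖ y1.1 := (hcon y1.1 hxy1).choose_spec.1
    have hw2cov : w1 ⋖ y2.1 := hww ▸ (hcon y2.1 hxy2).choose_spec.1
    have hw1ne : w1 ≠ x := (hcon y1.1 hxy1).choose_spec.2
    have hcard : 1 < ccUp rank (n + 2) x w1 := by
      rw [ccUp]
      rw [Finset.one_lt_card]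
      exact ⟨y1, by simp [hxy1, hw1cov], y2, by simp [hxy2, hw2cov], hne⟩
    have hle : ccUp rank (n + 2) x w1 ≤ 1 := by
      rw [hcommon w1 (hrank_w y1 _ hw1cov) hw1ne]
      exact ccDown_le_one rank hP n x z w1 hxr hzx huniq
    omega
  have hcard := Finset.card_le_card_of_injOn f hmaps hinj
  omega

lemma exists_thread_cover (hP : IsDifferentialPoset rank r) (x : P)
    (hx : IsThreadElem rank x) : ∃ y, x ⋖ y ∧ IsThreadElem rank y := by
  obtain ⟨y, hxy, hy⟩ := exists_singleton_cover rank hP x hx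
  refine ⟨y, hxy, Or.inr ⟨x, hxy, fun w hw => hy w hw⟩, x, hxy, hx.1⟩

end Aux


/-- Miller–Reiner. In an `r`-differential poset, every thread element
`t₀` extends to an infinite *thread*: a sequence `t₀ ⋖ t₁ ⋖ t₂ ⋖ ⋯` in which every `t_i`
is a thread element. -/
theorem thread_extends {P : Type*} [PartialOrder P] (rank : P → ℕ)
    [∀ m : ℕ, Fintype {x : P // rank x = m}] (r : ℕ)
    (hP : IsDifferentialPoset rank r) (t₀ : P) (ht₀ : IsThreadElem rank t₀) :
    ∃ t : ℕ → P, t 0 = t₀ ∧ (∀ i : ℕ, t i ⋖ t (i + 1)) ∧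
      ∀ i : ℕ, IsThreadElem rank (t i) := by
  have step : ∀ x : P, IsThreadElem rank x → ∃ y, x ⋖ y ∧ IsThreadElem rank y :=
    fun x hx => exists_thread_cover rank hP x hx
  let next : {q : P // IsThreadElem rank q} → {q : P // IsThreadElem rank q} :=
    fun p => ⟨(step p.1 p.2).choose, (step p.1 p.2).choose_spec.2⟩
  let seq : ℕ → {q : P // IsThreadElem rank q} := fun i => Nat.rec ⟨t₀, ht₀⟩ (fun _ p => next p) i
  refine ⟨fun i => (seq i).1, rfl, fun i => ?_, fun i => (seq i).2⟩
  exact (step (seq i).1 (seq i).2).choose_spec.1
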